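/- arXiv:2201.00159 — 2 statements merged into one kernel-verified Lean document; each statement's English description precedes it below -/
import Mathlib

section
/- Let G(t) = ∫₀ᵗ (N/2 · F(s)f'(s)/f(s)² − (N−2)/2)^{1/N} ds for t ≥ 0, where the integrand is well defined and positive by assumption. Then for every t > 0, G(t)^N ≤ t^N − (N/2)·t^{N−1}·F(t)/f(t). -/
open Real Set MeasureTheory Filter Topology

theorem stmt5 (N : ℕ) (hN : 2 ≤ N) (f : ℝ → ℝ) (δ : ℝ) (hδ : 0 < δ)
    (hf_cont : ContinuousOn f (Set.Ioi 0))
    (hf_diff : ∀ s : ℝ, 0 < s → DifferentiableAt ℝ f s)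
    (hderiv_cont : ContinuousOn (deriv f) (Set.Ioi 0))
    (hf_pos : ∀ s : ℝ, 0 < s → 0 < f s)
    (F : ℝ → ℝ) (hF : ∀ s : ℝ, F s = ∫ τ in (0)..s, f τ)
    (h : ℝ → ℝ)
    (hh : ∀ s : ℝ, h s = (N : ℝ) / 2 * (F s * deriv f s / (f s) ^ 2) - ((N : ℝ) - 2) / 2)
    (hh_pos : ∀ s : ℝ, 0 < s → (N : ℝ) / 2 * δ ≤ h s)
    (G : ℝ → ℝ) (hG : ∀ t : ℝ, G t = ∫ s in (0)..t, (h s) ^ ((1 : ℝ) / N)) :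
    ∀ t : ℝ, 0 < t →
      (G t) ^ N ≤ t ^ N - (N : ℝ) / 2 * t ^ (N - 1) * (F t / f t) := by
  intro t ht
  have hN2 : (2:ℝ) ≤ (N:ℝ) := by exact_mod_cast hN
  have hNpos : (0:ℝ) < N := by linarith
  have hNne : (N:ℝ) ≠ 0 := ne_of_gt hNpos
  -- positivity of h on (0,∞)
  have hhpos : ∀ s : ℝ, 0 < s → 0 < h s := by
    intro s hs
    have := hh_pos s hs
    nlinarith
  -- Step 1: f is interval integrable on [0,s]
  have hfi : ∀ s : ℝ, 0 < s → IntervalIntegrable f volume 0 s := by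
    intro s hs
    by_contra hcon
    have hFs : F s = 0 := by rw [hF s, intervalIntegral.integral_undef hcon]
    have h1 := hh_pos s hs
    rw [hh s, hFs] at h1
    simp only [zero_mul, zero_div, mul_zero, zero_sub] at h1
    nlinarith
  have hfIoc : ∀ s : ℝ, 0 < s → IntegrableOn f (Ioc 0 s) := fun s hs =>
    (intervalIntegrable_iff_integrableOn_Ioc_of_le hs.le).mp (hfi s hs)
  have hFpos : ∀ s : ℝ, 0 < s → 0 < F s := by
    intro s hs
    rw [hF s]
    exact intervalIntegral.intervalIntegral_pos_of_pos_on (hfi s hs)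
      (fun x hx => hf_pos x hx.1) hs
  have hf'pos : ∀ s : ℝ, 0 < s → 0 < deriv f s := by
    intro s hs
    have h1 := hh_pos s hs
    rw [hh s] at h1
    have hFp := hFpos s hs
    have hfs := hf_pos s hs
    have hf2 : (0:ℝ) < f s ^ 2 := by positivity
    have h2 : 0 < F s * deriv f s / f s ^ 2 := by nlinarith
    have h3 : 0 < F s * deriv f s := by
      have := mul_pos h2 hf2
      rwa [div_mul_cancel₀ _ (ne_of_gt hf2)] at this
    nlinarith
  have hmono : StrictMonoOn f (Ioi 0) :=
    strictMonoOn_of_deriv_pos (convex_Ioi 0) hf_cont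
      (by simpa [interior_Ioi] using hf'pos)
  -- bounds on F
  have hFle : ∀ s : ℝ, 0 < s → F s ≤ s * f s := by
    intro s hs
    rw [hF s, intervalIntegral.integral_of_le hs.le]
    have h1 : ∫ x in Ioc 0 s, f x ≤ ∫ x in Ioc 0 s, f s := by
      apply setIntegral_mono_on (hfIoc s hs) ((integrableOn_const_iff (C := f s)).mpr ?_) measurableSet_Ioc
      · intro x hx
        rcases eq_or_lt_of_le hx.2 with rfl | hlt
        · exact le_refl _
        · exact (hmono hx.1 hs hlt).le
      · right; simp [Real.volume_Ioc]
    have h2 : ∫ _x in Ioc 0 s, f s = s * f s := by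
      rw [setIntegral_const, measureReal_def, Real.volume_Ioc, smul_eq_mul,
        ENNReal.toReal_ofReal (by linarith)]
      ring_nf
    linarith
  have hFfle : ∀ s : ℝ, 0 < s → F s / f s ≤ s := by
    intro s hs
    rw [div_le_iff₀ (hf_pos s hs)]
    exact hFle s hs
  have hFfnn : ∀ s : ℝ, 0 < s → 0 ≤ F s / f s := fun s hs =>
    le_of_lt (div_pos (hFpos s hs) (hf_pos s hs))
  -- F has derivative f on (0,∞)
  have hFeq : F = fun u => ∫ x in (0:ℝ)..u, f x := funext hF
  have hF_deriv : ∀ s : ℝ, 0 < s → HasDerivAt F (f s) s := by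
    intro s hs
    rw [hFeq]
    exact intervalIntegral.integral_hasDerivAt_right (hfi s hs)
      (hf_cont.stronglyMeasurableAtFilter isOpen_Ioi s hs)
      (hf_cont.continuousAt (Ioi_mem_nhds hs))
  have hFcont : ContinuousOn F (Ioi 0) := fun s hs =>
    ((hF_deriv s hs).continuousAt).continuousWithinAt
  -- continuity of h
  have hhcont : ContinuousOn h (Ioi 0) := by
    have hmain : ContinuousOn
        (fun s => (N:ℝ)/2 * (F s * deriv f s / (f s)^2) - ((N:ℝ)-2)/2) (Ioi 0) := by
      apply ContinuousOn.sub _ continuousOn_const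
      apply continuousOn_const.mul
      exact (hFcont.mul hderiv_cont).div (hf_cont.pow 2)
        (fun x hx => by have := hf_pos x hx; positivity)
    exact hmain.congr (fun s _ => hh s)
  have hrcont : ContinuousOn (fun s => h s ^ ((1:ℝ)/N)) (Ioi 0) :=
    hhcont.rpow_const (fun x hx => Or.inl (ne_of_gt (hhpos x hx)))
  -- φ and its derivative
  set φ : ℝ → ℝ := fun s => s - (N:ℝ)/2 * (F s / f s) with hφdef
  have hφ_deriv : ∀ s : ℝ, 0 < s → HasDerivAt φ (h s) s := by
    intro s hs
    have hfs := hf_pos s hs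
    have h1 : HasDerivAt (fun u => F u / f u)
        ((f s * f s - F s * deriv f s) / (f s)^2) s := by
      have := (hF_deriv s hs).div ((hf_diff s hs).hasDerivAt) (ne_of_gt hfs)
      exact this
    have h2 : HasDerivAt φ (1 - (N:ℝ)/2 * ((f s * f s - F s * deriv f s) / (f s)^2)) s :=
      (hasDerivAt_id s).sub (h1.const_mul _)
    convert h2 using 1
    rw [hh s]
    field_simp
    try ring
  -- FTC on [ε,t]
  have hsubIoi : ∀ ε : ℝ, ε ∈ Ioo 0 t → Icc ε t ⊆ Ioi 0 := by
    intro ε hε x hx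
    exact lt_of_lt_of_le hε.1 hx.1
  have hFTC : ∀ ε : ℝ, ε ∈ Ioo 0 t → ∫ x in Ioc ε t, h x = φ t - φ ε := by
    intro ε hε
    have hint : IntervalIntegrable h volume ε t :=
      (hhcont.mono (by rw [uIcc_of_le hε.2.le]; exact hsubIoi ε hε)).intervalIntegrable
    rw [← intervalIntegral.integral_of_le hε.2.le]
    apply intervalIntegral.integral_eq_sub_of_hasDerivAt _ hint
    intro x hx
    rw [uIcc_of_le hε.2.le] at hx
    exact hφ_deriv x (hsubIoi ε hε hx)
  have hBnn : ∀ ε : ℝ, ε ∈ Ioo 0 t → 0 ≤ ∫ x in Ioc ε t, h x := by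
    intro ε hε
    exact setIntegral_nonneg measurableSet_Ioc
      (fun x hx => (hhpos x (hε.1.trans hx.1)).le)
  have hφεlb : ∀ ε : ℝ, ε ∈ Ioo 0 t → (1 - (N:ℝ)/2) * ε ≤ φ ε := by
    intro ε hε
    have h1 := hFfle ε hε.1
    simp only [hφdef]
    nlinarith
  -- main inequality in terms of φ
  have main : G t ^ N ≤ t ^ (N-1) * φ t := by
    by_cases hGint : IntervalIntegrable (fun s => h s ^ ((1:ℝ)/N)) volume 0 t
    · -- Jensen's inequality on [ε, t]
      have hJensen : ∀ ε : ℝ, ε ∈ Ioo 0 t →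
          (∫ x in Ioc ε t, h x ^ ((1:ℝ)/N)) ^ N ≤
            (t - ε) ^ (N-1) * ∫ x in Ioc ε t, h x := by
        intro ε hε
        have htε : 0 < t - ε := sub_pos.mpr hε.2
        set μ := volume.restrict (Ioc ε t) with hμ
        have hfin : IsFiniteMeasure μ := by
          constructor
          rw [hμ, Measure.restrict_apply_univ, Real.volume_Ioc]
          exact ENNReal.ofReal_lt_top
        have hne : NeZero μ := by
          refine ⟨?_⟩
          simp only [hμ, ne_eq, Measure.restrict_eq_zero, Real.volume_Ioc,
            ENNReal.ofReal_eq_zero, not_le]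
          linarith
        have hIccsub : Icc ε t ⊆ Ioi 0 := hsubIoi ε hε
        have hint_r : Integrable (fun x => h x ^ ((1:ℝ)/N)) μ :=
          (((hrcont.mono hIccsub).integrableOn_Icc).mono_set Ioc_subset_Icc_self)
        have hint_pow : Integrable (fun x => (h x ^ ((1:ℝ)/N)) ^ N) μ := by
          have : ContinuousOn (fun x => (h x ^ ((1:ℝ)/N)) ^ N) (Icc ε t) :=
            (hrcont.mono hIccsub).pow N
          exact this.integrableOn_Icc.mono_set Ioc_subset_Icc_self
        have hmem : ∀ᵐ x ∂μ, h x ^ ((1:ℝ)/N) ∈ Ici (0:ℝ) := by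
          refine (ae_restrict_mem measurableSet_Ioc).mono (fun x hx => ?_)
          exact Set.mem_Ici.mpr (Real.rpow_nonneg (hhpos x (hε.1.trans hx.1)).le _)
        have key := (convexOn_pow N).map_average_le (continuous_pow N).continuousOn
          isClosed_Ici hmem hint_r hint_pow
        -- rewrite (h x ^ (1/N)) ^ N = h x a.e.
        have havg : ⨍ x, (h x ^ ((1:ℝ)/N)) ^ N ∂μ = ⨍ x, h x ∂μ := by
          apply average_congr
          refine (ae_restrict_mem measurableSet_Ioc).mono (fun x hx => ?_)
          have hx0 : 0 < h x := hhpos x (hε.1.trans hx.1)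
          show (h x ^ ((1:ℝ)/N)) ^ N = h x
          rw [← Real.rpow_natCast (h x ^ ((1:ℝ)/N)) N, ← Real.rpow_mul hx0.le]
          rw [one_div, inv_mul_cancel₀ hNne, Real.rpow_one]
        rw [havg, average_eq, average_eq] at key
        have hμuniv : μ.real univ = t - ε := by
          rw [measureReal_def, hμ, Measure.restrict_apply_univ, Real.volume_Ioc,
            ENNReal.toReal_ofReal htε.le]
        rw [hμuniv, smul_eq_mul, smul_eq_mul] at key
        set A := ∫ x, h x ^ ((1:ℝ)/N) ∂μ with hA
        set B := ∫ x, h x ∂μ with hB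
        have hexp : (t-ε)^(N-1) * (t-ε) = (t-ε)^N := by
          rw [← pow_succ]
          congr 1
          omega
        have hBnn' : 0 ≤ B := hBnn ε hε
        calc A ^ N = ((t-ε)⁻¹ * A)^N * (t-ε)^N := by
              rw [← mul_pow]
              congr 1
              field_simp
          _ ≤ ((t-ε)⁻¹ * B) * (t-ε)^N :=
              mul_le_mul_of_nonneg_right key (by positivity)
          _ = (t-ε)^(N-1) * B := by
              rw [← hexp]
              field_simp
      -- Tendsto of truncated integrals
      have hintIoc : IntegrableOn (fun s => h s ^ ((1:ℝ)/N)) (Ioc 0 t) :=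
        (intervalIntegrable_iff_integrableOn_Ioc_of_le ht.le).mp hGint
      set P : ℝ → ℝ := fun b => ∫ x in t..b, h x ^ ((1:ℝ)/N) with hP
      have hPcont : ContinuousOn P (uIcc 0 t) :=
        intervalIntegral.continuousOn_primitive_interval' hGint right_mem_uIcc
      have hP0 : P 0 = -(G t) := by
        simp only [hP]
        rw [intervalIntegral.integral_symm, hG t]
      have hfilt : 𝓝[>] (0:ℝ) ≤ 𝓝[uIcc 0 t] 0 := by
        rw [nhdsWithin_le_iff]
        exact mem_of_superset (Ioo_mem_nhdsGT ht)
          (fun x hx => by rw [uIcc_of_le ht.le]; exact ⟨hx.1.le, hx.2.le⟩)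
      have hPtend : Tendsto P (𝓝[>] (0:ℝ)) (𝓝 (-(G t))) := by
        rw [← hP0]
        exact ((hPcont 0 (by rw [uIcc_of_le ht.le]; exact ⟨le_refl 0, ht.le⟩)).tendsto).mono_left hfilt
      have hAtend : Tendsto (fun ε => ∫ x in Ioc ε t, h x ^ ((1:ℝ)/N))
          (𝓝[>] (0:ℝ)) (𝓝 (G t)) := by
        have : Tendsto (fun ε => -(P ε)) (𝓝[>] (0:ℝ)) (𝓝 (G t)) := by
          simpa using hPtend.neg
        refine this.congr' ?_
        filter_upwards [Ioo_mem_nhdsGT ht] with ε hε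
        rw [hP, ← intervalIntegral.integral_symm, intervalIntegral.integral_of_le hε.2.le]
      have hpowtend : Tendsto (fun ε => (∫ x in Ioc ε t, h x ^ ((1:ℝ)/N)) ^ N)
          (𝓝[>] (0:ℝ)) (𝓝 (G t ^ N)) := hAtend.pow N
      have hrhstend : Tendsto (fun ε : ℝ => t^(N-1) * (φ t + ((N:ℝ)/2 - 1) * ε))
          (𝓝[>] (0:ℝ)) (𝓝 (t^(N-1) * φ t)) := by
        have hc : Continuous (fun ε : ℝ => t^(N-1) * (φ t + ((N:ℝ)/2 - 1) * ε)) := by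
          fun_prop
        have h2 := (hc.tendsto 0).mono_left (nhdsWithin_le_nhds (s := Ioi (0:ℝ)))
        simpa using h2
      refine le_of_tendsto_of_tendsto hpowtend hrhstend ?_
      filter_upwards [Ioo_mem_nhdsGT ht] with ε hε
      have h1 := hJensen ε hε
      have h2 := hFTC ε hε
      have h3 := hBnn ε hε
      have h4 := hφεlb ε hε
      have htε : 0 < t - ε := sub_pos.mpr hε.2
      have h5 : (t-ε)^(N-1) ≤ t^(N-1) :=
        pow_le_pow_left₀ htε.le (by linarith [hε.1]) _
      have h6 : (t-ε)^(N-1) * ∫ x in Ioc ε t, h x ≤ t^(N-1) * ∫ x in Ioc ε t, h x :=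
        mul_le_mul_of_nonneg_right h5 h3
      have h7 : φ t - φ ε ≤ φ t + ((N:ℝ)/2 - 1) * ε := by nlinarith
      have h8 : t^(N-1) * ∫ x in Ioc ε t, h x ≤ t^(N-1) * (φ t + ((N:ℝ)/2 - 1) * ε) := by
        rw [h2]
        apply mul_le_mul_of_nonneg_left h7 (by positivity)
      calc (∫ x in Ioc ε t, h x ^ ((1:ℝ)/N)) ^ N
          ≤ (t-ε)^(N-1) * ∫ x in Ioc ε t, h x := h1
        _ ≤ t^(N-1) * ∫ x in Ioc ε t, h x := h6
        _ ≤ t^(N-1) * (φ t + ((N:ℝ)/2 - 1) * ε) := h8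
    · -- non-integrable case: G t = 0
      have hGt : G t = 0 := by
        rw [hG t]
        exact intervalIntegral.integral_undef hGint
      have hφtnn : 0 ≤ φ t := by
        have htend : Tendsto (fun ε : ℝ => (1 - (N:ℝ)/2) * ε) (𝓝[>] (0:ℝ)) (𝓝 0) := by
          have hc : Continuous (fun ε : ℝ => (1 - (N:ℝ)/2) * ε) := by fun_prop
          have h2 := (hc.tendsto 0).mono_left (nhdsWithin_le_nhds (s := Ioi (0:ℝ)))
          simpa using h2
        refine le_of_tendsto htend ?_
        filter_upwards [Ioo_mem_nhdsGT ht] with ε hε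
        have h1 := hφεlb ε hε
        have h2 := hFTC ε hε
        have h3 := hBnn ε hε
        exact h1.trans (by linarith)
      rw [hGt]
      rw [zero_pow (by omega : N ≠ 0)]
      positivity
  -- convert to the stated form
  have hpow : t^(N-1) * t = t^N := by
    rw [← pow_succ]
    congr 1
    omega
  have hexpand : t^(N-1) * φ t = t^N - (N:ℝ)/2 * t^(N-1) * (F t / f t) := by
    simp only [hφdef]
    rw [mul_sub, hpow]
    ring
  rw [← hexpand]
  exact main
end

section
/- Let t : ℕ → ℝ with t_n ≥ 1 for all n, and suppose there exist constants K > 0 and a sequence δ_n → 0 with δ_n ≥ 0 such that for all large n: t_n^N ≥ K · exp(2N log n · ((t_n/(1+δ_n)^{1/N})^{N/(N−1)} − 1)) / (t_n/(1+δ_n)^{1/N})^{N/(N−1)}. If in addition t_n^N ≥ 1 + δ for all n for some fixed δ > 0, then one reaches a contradiction; hence liminf_{n→∞} t_n ≤ 1, and combined with t_n ≥ 1, lim_{n→∞} t_n = 1. -/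
open Real Filter

theorem stmt18 (N : ℕ) (hN : 2 ≤ N) (t δ' : ℕ → ℝ) (K : ℝ) (hK : 0 < K)
    (ht : ∀ n, 1 ≤ t n) (hδ'_nonneg : ∀ n, 0 ≤ δ' n)
    (hδ'_lim : Tendsto δ' atTop (nhds 0))
    (hineq : ∀ᶠ n : ℕ in atTop,
      K * Real.exp (2 * N * Real.log n *
          ((t n / (1 + δ' n) ^ ((1 : ℝ) / N)) ^ ((N : ℝ) / (N - 1)) - 1)) /
        (t n / (1 + δ' n) ^ ((1 : ℝ) / N)) ^ ((N : ℝ) / (N - 1)) ≤ t n ^ N) :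
    (∀ δ : ℝ, 0 < δ → ¬ (∀ n, 1 + δ ≤ t n ^ N)) ∧
    Filter.liminf t atTop ≤ 1 ∧
    Tendsto t atTop (nhds 1) := by
  have hN2 : (2:ℝ) ≤ (N:ℝ) := by exact_mod_cast hN
  have hN1' : (0:ℝ) < (N:ℝ) - 1 := by linarith
  have key : Tendsto t atTop (nhds 1) := by
    rw [tendsto_order]
    constructor
    · intro x hx
      exact Filter.Eventually.of_forall fun n => lt_of_lt_of_le hx (ht n)
    · intro b hb
      by_contra hcon
      rw [Filter.not_eventually] at hcon
      have hfreq : ∃ᶠ n in atTop, b ≤ t n := hcon.mono fun n h => not_lt.1 h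
      set c : ℝ := b / (1 + (b - 1) / 2) with hc
      have hc1 : 1 < c := by
        rw [hc, lt_div_iff₀ (by linarith)]
        linarith
      set η : ℝ := c - 1 with hη
      have hη0 : 0 < η := by simp only [hη]; linarith
      set p : ℝ := (N:ℝ) / ((N:ℝ) - 1) with hp
      have hp1 : 1 ≤ p := by
        rw [hp, le_div_iff₀ hN1']
        linarith
      set M : ℝ := max 0 ((2 - Real.log K) / η) with hM
      have hM0 : (0:ℝ) ≤ M := le_max_left _ _
      -- eventual smallness of δ'
      have ev1 : ∀ᶠ n : ℕ in atTop, δ' n ≤ (b-1)/2 ∧ δ' n ≤ 1 := by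
        have h1 := hδ'_lim.eventually_lt_const
          (show (0:ℝ) < min ((b-1)/2) 1 from lt_min (by linarith) one_pos)
        exact h1.mono fun n hn =>
          ⟨(hn.le.trans (min_le_left _ _)), (hn.le.trans (min_le_right _ _))⟩
      -- eventual largeness of log
      have ev2 : ∀ᶠ n : ℕ in atTop, (N:ℝ) + M ≤ 2 * N * Real.log n := by
        have hl : Tendsto (fun n : ℕ => Real.log n) atTop atTop :=
          Real.tendsto_log_atTop.comp tendsto_natCast_atTop_atTop
        have := (hl.const_mul_atTop (show (0:ℝ) < 2*N by positivity)).eventually_ge_atTop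
          ((N:ℝ) + M)
        exact this.mono fun n hn => by linarith [hn]
      obtain ⟨n, hbn, hin, ⟨hδ1, hδ2⟩, hlogn⟩ :=
        (hfreq.and_eventually (hineq.and (ev1.and ev2))).exists
      have hδn := hδ'_nonneg n
      set d : ℝ := (1 + δ' n) ^ ((1:ℝ)/N) with hd
      have hd1 : 1 ≤ d := Real.one_le_rpow (by linarith) (by positivity)
      have hdle : d ≤ 1 + (b-1)/2 := by
        calc d ≤ (1 + δ' n) ^ (1:ℝ) :=
              Real.rpow_le_rpow_of_exponent_le (by linarith)
                (by rw [div_le_one (by positivity)]; linarith)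
          _ = 1 + δ' n := Real.rpow_one _
          _ ≤ 1 + (b-1)/2 := by linarith
      set s : ℝ := t n / d with hs
      have hs0 : 0 < s := div_pos (lt_of_lt_of_le one_pos (ht n)) (by linarith)
      have hsc : c ≤ s := by
        rw [hc, hs, div_le_div_iff₀ (by linarith) (by linarith)]
        nlinarith [ht n]
      set a : ℝ := s ^ p with ha
      have hac : c ≤ a := by
        calc c = c ^ (1:ℝ) := (Real.rpow_one c).symm
          _ ≤ c ^ p := Real.rpow_le_rpow_of_exponent_le hc1.le hp1
          _ ≤ s ^ p := Real.rpow_le_rpow (by linarith) hsc (by linarith)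
      have ha1 : 1 < a := lt_of_lt_of_le hc1 hac
      have ha0 : 0 < a := by linarith
      have hNne : (N:ℝ) ≠ 0 := by positivity
      have hdN : d ^ N = 1 + δ' n := by
        rw [hd, ← Real.rpow_natCast ((1 + δ' n) ^ ((1:ℝ)/N)) N,
          ← Real.rpow_mul (by linarith)]
        rw [show (1:ℝ)/N * N = 1 by field_simp]
        exact Real.rpow_one _
      have htn : t n = s * d := by
        rw [hs]; field_simp
      have hcast : ((N-1:ℕ):ℝ) = (N:ℝ) - 1 := by
        rw [Nat.cast_sub (by omega)]; norm_num
      have htN : t n ^ N = a ^ (N-1) * (1 + δ' n) := by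
        rw [htn, mul_pow, hdN]
        congr 1
        rw [ha, ← Real.rpow_natCast (s ^ p) (N-1), ← Real.rpow_mul hs0.le,
          ← Real.rpow_natCast s N]
        congr 1
        rw [hp, hcast]
        field_simp
      set X : ℝ := 2 * N * Real.log n * (a - 1) with hX
      have h1 : K * Real.exp X / a ≤ a ^ (N-1) * (1 + δ' n) := htN ▸ hin
      have hlog1 : Real.log (K * Real.exp X / a) ≤ Real.log (a ^ (N-1) * (1 + δ' n)) :=
        Real.log_le_log (by positivity) h1
      rw [Real.log_div (by positivity) (ne_of_gt ha0),
        Real.log_mul (ne_of_gt hK) (Real.exp_ne_zero _), Real.log_exp,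
        Real.log_mul (by positivity) (by linarith), Real.log_pow, hcast] at hlog1
      have hloga : Real.log a ≤ a - 1 := Real.log_le_sub_one_of_pos ha0
      have hla0 : 0 ≤ Real.log a := Real.log_nonneg ha1.le
      have hlogδ : Real.log (1 + δ' n) ≤ 1 := by
        have := Real.log_le_sub_one_of_pos (show 0 < 1 + δ' n by linarith)
        linarith
      have h3 : (N:ℝ) * Real.log a ≤ (N:ℝ) * (a - 1) :=
        mul_le_mul_of_nonneg_left hloga (by positivity)
      have h2 : X ≤ (N:ℝ) * (a - 1) + 1 - Real.log K := by linarith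
      -- contradiction
      have h4 : 2 - Real.log K ≤ η * M := by
        have hle : (2 - Real.log K) / η ≤ M := le_max_right _ _
        calc 2 - Real.log K = η * ((2 - Real.log K) / η) := by field_simp
          _ ≤ η * M := mul_le_mul_of_nonneg_left hle hη0.le
      have h5 : η * M ≤ (a - 1) * (2 * N * Real.log n - N) := by
        have e1 : η ≤ a - 1 := by simp only [hη]; linarith
        have e2 : M ≤ 2 * N * Real.log n - N := by linarith
        exact mul_le_mul e1 e2 hM0 (by linarith)
      have h6 : (a - 1) * (2 * N * Real.log n - N) ≤ 1 - Real.log K := by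
        have he : (a - 1) * (2 * N * Real.log n - N) = X - N * (a - 1) := by
          rw [hX]; ring
        linarith [h2]
      linarith [h4.trans (h5.trans h6)]
  refine ⟨?_, ?_, key⟩
  · intro δ hδ h
    have hpow : Tendsto (fun n => t n ^ N) atTop (nhds 1) := by
      have := key.pow N
      simpa using this
    have := hpow.eventually_lt_const (show (1:ℝ) < 1 + δ by linarith)
    obtain ⟨n, hn⟩ := this.exists
    exact absurd (h n) (not_le.2 hn)
  · exact le_of_eq key.liminf_eq
end
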